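/- For a full-rank lattice Γ ⊂ R^n, a continuous function f : R^n → C is strongly Γ-equivariant if and only if it is Γ-periodic, i.e., f(x + γ) = f(x) for all γ ∈ Γ and x ∈ R^n. -/

import Mathlib

open Metric Set

noncomputable section

/-- Euclidean space ℝ^n. -/
abbrev E (n : ℕ) := EuclideanSpace ℝ (Fin n)

variable {V : Type*} [SeminormedAddCommGroup V]

/-- The setTranslate `S - x` of a point set `S`. -/
def setTranslate (S : Set V) (x : V) : Set V := {v | x + v ∈ S}

/-- The `r`-patch of `P` at `x`: `B_r ∩ (P - x)` where `B_r` is the closed `r`-ball at `0`. -/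
def patch (P : Set V) (x : V) (r : ℝ) : Set V := Metric.closedBall (0 : V) r ∩ setTranslate P x

/-- `f` is strongly `P`-equivariant: for some `r > 0`, equality of the `r`-patches of `P`
at `x` and `y` implies `f x = f y`. -/
def StronglyEquivariant (P : Set V) {X : Type*} (f : V → X) : Prop :=
  ∃ r > 0, ∀ x y : V, patch P x r = patch P y r → f x = f y

/-- `D` is locally derivable from `P`. -/
def LocallyDerivable (P D : Set V) : Prop :=
  ∀ r > 0, ∃ R > 0, ∀ x y : V, patch P x R = patch P y R → patch D x r = patch D y r

/-- `P` has finite local complexity: for each `r > 0` there are only finitely many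
translation classes of `r`-patches (anchored at points of `P`). -/
def FiniteLocalComplexity (P : Set V) : Prop :=
  ∀ r > 0, {s : Set V | ∃ p ∈ P, s = patch P p r}.Finite

/-- `P` is uniformly discrete. -/
def UniformlyDiscrete (P : Set V) : Prop :=
  ∃ r0 > 0, ∀ p ∈ P, ∀ q ∈ P, p ≠ q → r0 ≤ dist p q

/-- `P` is relatively dense. -/
def RelativelyDense (P : Set V) : Prop :=
  ∃ R > 0, ∀ x : V, ∃ p ∈ P, dist x p ≤ R

/-- The pattern (pseudo)metric `D(S,S') = min(1, inf {1/(r+1) | ∃ x x', |x|,|x'| ≤ 1/r,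
B_r ∩ (S-x) = B_r ∩ (S'-x')})`. -/
def patternDist (S S' : Set V) : ℝ :=
  min 1 (sInf {d : ℝ | ∃ r > 0, d = 1 / (r + 1) ∧
    ∃ x x' : V, ‖x‖ ≤ 1 / r ∧ ‖x'‖ ≤ 1 / r ∧ patch S x r = patch S' x' r})

/-- for a full-rank lattice Γ, a continuous function is strongly
Γ-equivariant iff it is Γ-periodic. -/
theorem stronglyEquivariant_iff_periodic_lattice {n : ℕ}
    (b : Module.Basis (Fin n) ℝ (E n)) (Γ : Set (E n))
    (hΓ : Γ = Set.range (fun c : Fin n → ℤ => ∑ i, (c i : ℝ) • b i))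
    (f : E n → ℂ) (hf : Continuous f) :
    StronglyEquivariant Γ f ↔ ∀ γ ∈ Γ, ∀ x : E n, f (x + γ) = f x := by
  have hsub : ∀ p q : E n, p ∈ Γ → q ∈ Γ → p - q ∈ Γ := by
    rintro p q hp hq
    rw [hΓ] at *
    obtain ⟨c, rfl⟩ := hp
    obtain ⟨d, rfl⟩ := hq
    refine ⟨c - d, ?_⟩
    simp [sub_smul, Finset.sum_sub_distrib]
  have hadd : ∀ p q : E n, p ∈ Γ → q ∈ Γ → p + q ∈ Γ := by
    rintro p q hp hq
    rw [hΓ] at *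
    obtain ⟨c, rfl⟩ := hp
    obtain ⟨d, rfl⟩ := hq
    refine ⟨c + d, ?_⟩
    simp [add_smul, Finset.sum_add_distrib]
  constructor
  · rintro ⟨r, hr, hE⟩ γ hγ x
    apply hE
    ext v
    simp only [patch, setTranslate, Set.mem_inter_iff, Set.mem_setOf_eq]
    constructor
    · rintro ⟨h1, h2⟩
      refine ⟨h1, ?_⟩
      have : x + γ + v - γ = x + v := by abel
      rw [← this]
      exact hsub _ _ h2 hγ
    · rintro ⟨h1, h2⟩
      refine ⟨h1, ?_⟩
      have : x + v + γ = x + γ + v := by abel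
      rw [← this]
      exact hadd _ _ h2 hγ
  · intro hper
    refine ⟨(∑ i, ‖b i‖) + 1, by positivity, ?_⟩
    intro x y hpatch
    set c : Fin n → ℤ := fun i => round (b.repr x i) with hc
    set γ : E n := ∑ i, (c i : ℝ) • b i with hγdef
    have hγΓ : γ ∈ Γ := by rw [hΓ]; exact ⟨c, rfl⟩
    have hxrep : ∑ i, b.repr x i • b i = x := b.sum_repr x
    have hnear : ‖γ - x‖ ≤ ∑ i, ‖b i‖ := by
      have hrw : γ - x = ∑ i, ((c i : ℝ) - b.repr x i) • b i := by
        rw [hγdef, ← hxrep, ← Finset.sum_sub_distrib]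
        simp [sub_smul]
      rw [hrw]
      calc ‖∑ i, ((c i : ℝ) - b.repr x i) • b i‖
          ≤ ∑ i, ‖((c i : ℝ) - b.repr x i) • b i‖ := norm_sum_le _ _
        _ ≤ ∑ i, ‖b i‖ := by
            apply Finset.sum_le_sum
            intro i _
            rw [norm_smul, Real.norm_eq_abs]
            have h1 : |(c i : ℝ) - b.repr x i| ≤ 1 := by
              have := abs_sub_round (b.repr x i)
              rw [abs_sub_comm] at this
              linarith
            exact mul_le_of_le_one_left (norm_nonneg _) h1
    set v : E n := γ - x with hv
    have hvmem : v ∈ patch Γ x ((∑ i, ‖b i‖) + 1) := by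
      constructor
      · rw [Metric.mem_closedBall, dist_zero_right]
        linarith
      · show x + v ∈ Γ
        have : x + v = γ := by rw [hv]; abel
        rw [this]; exact hγΓ
    rw [hpatch] at hvmem
    have hyv : y + v ∈ Γ := hvmem.2
    have hxy : x - y ∈ Γ := by
      have : x - y = γ - (y + v) := by rw [hv]; abel
      rw [this]
      exact hsub _ _ hγΓ hyv
    have := hper (x - y) hxy y
    rwa [add_sub_cancel] at this
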